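/- In every sequential execution from q of a sequence of invocations in which each of the competing invocations o_1, …, o_k occurs at most once, in an arbitrary order, at most one invocation returns true. -/

import Mathlib

/-- A token state: balances and allowances. -/
structure TokenState (A P : Type*) where
  bal : A → ℕ
  alw : A × P → ℕ

variable {A P : Type*} [DecidableEq A] [DecidableEq P] [Fintype A] [Fintype P]

/-- The set of enabled spenders of account `a` in state `q`. -/
def spenders (ω : A ≃ P) (q : TokenState A P) (a : A) : Finset P :=
  if q.bal a = 0 then {ω a}
  else Finset.univ.filter fun p => p = ω a ∨ 0 < q.alw (a, p)

/-- The maximum, over all accounts, of the number of enabled spenders. -/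
def maxSpenders (ω : A ≃ P) (q : TokenState A P) : ℕ :=
  Finset.univ.sup fun a => (spenders ω q a).card

/-- `Qset ω k` is the set of token states whose maximal number of enabled
spenders for a single account equals `k`. -/
def Qset (ω : A ≃ P) (k : ℕ) : Set (TokenState A P) :=
  {q | maxSpenders ω q = k}

/-- `transfer(a_d, v)` invoked by process `p`. Returns the new state and the response. -/
def transferOp (ω : A ≃ P) (p : P) (ad : A) (v : ℕ) (q : TokenState A P) :
    TokenState A P × Bool :=
  if v ≤ q.bal (ω.symm p) then
    (⟨Function.update (Function.update q.bal (ω.symm p) (q.bal (ω.symm p) - v)) ad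
        (Function.update q.bal (ω.symm p) (q.bal (ω.symm p) - v) ad + v), q.alw⟩, true)
  else (q, false)

/-- `transferFrom(a_s, a_d, v)` invoked by process `p`. -/
def transferFromOp (p : P) (asrc ad : A) (v : ℕ) (q : TokenState A P) :
    TokenState A P × Bool :=
  if v ≤ q.bal asrc ∧ v ≤ q.alw (asrc, p) then
    (⟨Function.update (Function.update q.bal asrc (q.bal asrc - v)) ad
        (Function.update q.bal asrc (q.bal asrc - v) ad + v),
      Function.update q.alw (asrc, p) (q.alw (asrc, p) - v)⟩, true)
  else (q, false)

/-- `approve(p̄, v)` invoked by process `p`: always succeeds and sets `α(a_p, p̄) := v`. -/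
def approveOp (ω : A ≃ P) (p pbar : P) (v : ℕ) (q : TokenState A P) :
    TokenState A P × Bool :=
  (⟨q.bal, Function.update q.alw (ω.symm p, pbar) v⟩, true)

/-- Sequential execution of a list of invocations: the final state. -/
def execRun {ι : Type*} (ops : ι → TokenState A P → TokenState A P × Bool) :
    List ι → TokenState A P → TokenState A P
  | [], q => q
  | i :: r, q => execRun ops r (ops i q).1

/-- Sequential execution of a list of invocations, recording each invocation
together with its response. -/
def runRes {ι : Type*} (ops : ι → TokenState A P → TokenState A P × Bool) :
    List ι → TokenState A P → List (ι × Bool)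
  | [], _ => []
  | i :: r, q => (i, (ops i q).2) :: runRes ops r (ops i q).1

/-- The competing invocations: `o_0` is `transfer(a_d, B)` by the owner `p 0`,
and for `i ≠ 0`, `o_i` is `transferFrom(a_1, a_d, A_i)` by `p i`, where `B` and
`A_i` are the balance and allowances in the fixed starting state `q`. -/
def compOps (ω : A ≃ P) (q : TokenState A P) (a1 ad : A) {k : ℕ} [NeZero k]
    (p : Fin k → P) (i : Fin k) : TokenState A P → TokenState A P × Bool :=
  if i = 0 then transferOp ω (p 0) ad (q.bal a1)
  else transferFromOp (p i) a1 ad (q.alw (a1, p i))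


/-- Auxiliary: if every remaining competing invocation's amount exceeds the
current balance of `a1`, then no invocation returns `true`. -/
theorem lzero (ω : A ≃ P) (q : TokenState A P) (a1 ad : A)
    {k : ℕ} [NeZero k] (p : Fin k → P) (hp1 : p 0 = ω a1) :
    ∀ (l : List (Fin k)) (s : TokenState A P),
      (∀ i ∈ l, s.bal a1 < (if i = 0 then q.bal a1 else q.alw (a1, p i))) →
      (runRes (compOps ω q a1 ad p) l s).countP (fun x => x.2) = 0 := by
  intro l
  induction l with
  | nil => intro s _; rfl
  | cons i r ih =>
    intro s h
    have hi := h i List.mem_cons_self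
    have hfail : compOps ω q a1 ad p i s = (s, false) := by
      by_cases h0 : i = 0
      · subst h0
        have hi' : s.bal a1 < q.bal a1 := by simpa using hi
        unfold compOps
        rw [if_pos rfl]
        unfold transferOp
        rw [hp1, Equiv.symm_apply_apply, if_neg (by omega)]
      · rw [if_neg h0] at hi
        unfold compOps
        rw [if_neg h0]
        unfold transferFromOp
        rw [if_neg (by omega)]
    simp only [runRes, hfail]
    rw [List.countP_cons]
    simp only [decide_eq_true_eq, Bool.false_eq_true, if_false, add_zero]
    exact ih s (fun j hj => h j (List.mem_cons_of_mem _ hj))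

/-- in every sequential execution from `q` of a sequence of
invocations in which each competing invocation occurs at most once, in an
arbitrary order, at most one invocation returns `true`. -/
theorem stmt4 (n : ℕ) (hn : 1 ≤ n)
    (hcA : Fintype.card A = n) (hcP : Fintype.card P = n) (ω : A ≃ P)
    (q : TokenState A P) (a1 ad : A) (had : ad ≠ a1)
    (k : ℕ) [NeZero k] (hkn : k ≤ n)
    (p : Fin k → P) (hinj : Function.Injective p) (hp1 : p 0 = ω a1)
    (hB : 0 < q.bal a1)
    (hAi : ∀ i : Fin k, i ≠ 0 → 0 < q.alw (a1, p i))
    (hut : k ≤ 2 ∨ ∀ i j : Fin k, i ≠ 0 → j ≠ 0 → i ≠ j →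
      q.bal a1 < q.alw (a1, p i) + q.alw (a1, p j)) :
    ∀ l : List (Fin k), l.Nodup →
      (runRes (compOps ω q a1 ad p) l q).countP (fun x => x.2) ≤ 1 := by
  intro l
  induction l with
  | nil => intro _; simp [runRes]
  | cons i r ih =>
    intro hl
    have hir : i ∉ r := (List.nodup_cons.mp hl).1
    have hr : r.Nodup := (List.nodup_cons.mp hl).2
    by_cases h0 : i = 0
    · -- o_0 : transfer(ad, B), succeeds, balance of a1 becomes 0
      subst h0
      have hcond : q.bal a1 ≤ q.bal (ω.symm (p 0)) := by
        rw [hp1, Equiv.symm_apply_apply]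
      have hop : compOps ω q a1 ad p 0 q =
        (⟨Function.update (Function.update q.bal (ω.symm (p 0)) (q.bal (ω.symm (p 0)) - q.bal a1)) ad
            (Function.update q.bal (ω.symm (p 0)) (q.bal (ω.symm (p 0)) - q.bal a1) ad + q.bal a1),
          q.alw⟩, true) := by
        unfold compOps
        rw [if_pos rfl]
        unfold transferOp
        rw [if_pos hcond]
      have hbal :
          (Function.update (Function.update q.bal (ω.symm (p 0)) (q.bal (ω.symm (p 0)) - q.bal a1)) ad
            (Function.update q.bal (ω.symm (p 0)) (q.bal (ω.symm (p 0)) - q.bal a1) ad + q.bal a1)) a1 = 0 := by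
        rw [Function.update_of_ne (Ne.symm had), hp1, Equiv.symm_apply_apply,
          Function.update_self, Nat.sub_self]
      simp only [runRes, hop, List.countP_cons]
      rw [lzero ω q a1 ad p hp1 r _ ?_]
      · simp
      · intro j hj
        have hj0 : j ≠ 0 := fun hh => hir (hh ▸ hj)
        dsimp only
        rw [hbal, if_neg hj0]
        exact hAi j hj0
    · -- o_i : transferFrom
      by_cases hc : q.alw (a1, p i) ≤ q.bal a1
      · -- succeeds; balance of a1 becomes B - A_i
        have hcond : q.alw (a1, p i) ≤ q.bal a1 ∧
            q.alw (a1, p i) ≤ q.alw (a1, p i) := ⟨hc, le_refl _⟩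
        have hop : compOps ω q a1 ad p i q =
          (⟨Function.update (Function.update q.bal a1 (q.bal a1 - q.alw (a1, p i))) ad
              (Function.update q.bal a1 (q.bal a1 - q.alw (a1, p i)) ad + q.alw (a1, p i)),
            Function.update q.alw (a1, p i) (q.alw (a1, p i) - q.alw (a1, p i))⟩, true) := by
          unfold compOps
          rw [if_neg h0]
          unfold transferFromOp
          rw [if_pos hcond]
        have hbal :
            (Function.update (Function.update q.bal a1 (q.bal a1 - q.alw (a1, p i))) ad
              (Function.update q.bal a1 (q.bal a1 - q.alw (a1, p i)) ad + q.alw (a1, p i))) a1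
            = q.bal a1 - q.alw (a1, p i) := by
          rw [Function.update_of_ne (Ne.symm had), Function.update_self]
        simp only [runRes, hop, List.countP_cons]
        rw [lzero ω q a1 ad p hp1 r _ ?_]
        · simp
        · intro j hj
          have hji : j ≠ i := fun hh => hir (hh ▸ hj)
          have hAipos : 0 < q.alw (a1, p i) := hAi i h0
          dsimp only
          rw [hbal]
          by_cases hj0 : j = 0
          · rw [if_pos hj0]; omega
          · rw [if_neg hj0]
            rcases hut with hk2 | hut
            · exfalso
              apply hji
              have hik : i.val < k := i.isLt
              have hjk : j.val < k := j.isLt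
              have hi0 : i.val ≠ 0 := fun hh => h0 (Fin.ext (by simp [hh]))
              have hj0' : j.val ≠ 0 := fun hh => hj0 (Fin.ext (by simp [hh]))
              exact Fin.ext (by omega)
            · have := hut i j h0 hj0 (Ne.symm hji)
              omega
      · -- fails; state unchanged
        have hcond : ¬ (q.alw (a1, p i) ≤ q.bal a1 ∧
            q.alw (a1, p i) ≤ q.alw (a1, p i)) := fun h => hc h.1
        have hop : compOps ω q a1 ad p i q = (q, false) := by
          unfold compOps
          rw [if_neg h0]
          unfold transferFromOp
          rw [if_neg hcond]
        simp only [runRes, hop, List.countP_cons]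
        simp only [decide_eq_true_eq, Bool.false_eq_true, if_false, add_zero]
        exact ih hr
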